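/- Let μ > 0, T > 0, and let c_ε : [0,T] → ℂ satisfy ‖c_ε‖_{L²(0,T)} ≤ C uniformly in ε and suppose additionally there is a decomposition c_ε = c_ε¹ + c_ε² with ‖c_ε¹‖_{L¹(0,T)} ≤ C√ε and ‖c_ε²‖_{L²(0,T)} ≤ C. Then t ↦ ∫₀ᵗ c_ε(s) e^{-(μ/√ε)(t−s)} ds tends to 0 in L²(0,T) as ε → 0, with rate ε^{1/4} from the c_ε² part (via Young's convolution inequality ‖f * g‖_{L²} ≤ ‖f‖_{L²}‖g‖_{L¹} and ‖e^{-(μ/√ε)·}‖_{L¹(0,∞)} = √ε/μ). -/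

import Mathlib

open MeasureTheory

-- helpers
lemma amgm18 (l x y : ℝ) (hl : 0 < l) : x*y ≤ (l*x^2 + y^2/l)/2 := by
  have h := sq_nonneg (l*x - y)
  have h2 : y^2/l*l = y^2 := div_mul_cancel₀ _ hl.ne'
  nlinarith [mul_pos hl hl]

lemma exp_int18 (a t : ℝ) (ha : 0 < a) :
    ∫ s in (0:ℝ)..t, Real.exp (2*a*s - 2*a*t) ≤ 1/(2*a) := by
  have hder : ∀ s ∈ Set.uIcc (0:ℝ) t, HasDerivAt (fun u => Real.exp (2*a*u - 2*a*t)/(2*a))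
      (Real.exp (2*a*s - 2*a*t)) s := by
    intro s _
    have h1 : HasDerivAt (fun u : ℝ => 2*a*u - 2*a*t) (2*a) s := by
      simpa using ((hasDerivAt_id s).const_mul (2*a)).sub_const (2*a*t)
    have h2 : HasDerivAt (fun u => Real.exp (2*a*u - 2*a*t)/(2*a))
        (Real.exp (2*a*s - 2*a*t) * (2*a) / (2*a)) s := (h1.exp).div_const (2*a)
    convert h2 using 1
    exact (mul_div_cancel_right₀ _ (by positivity : (2*a:ℝ) ≠ 0)).symm
  have hcont : IntervalIntegrable (fun s => Real.exp (2*a*s - 2*a*t)) volume 0 t :=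
    (Real.continuous_exp.comp (by continuity)).intervalIntegrable 0 t
  rw [intervalIntegral.integral_eq_sub_of_hasDerivAt hder hcont]
  have h3 : Real.exp (2*a*t - 2*a*t) = 1 := by simp
  have h4 : 0 < Real.exp (2*a*0 - 2*a*t) := Real.exp_pos _
  have h5 : 0 < 2*a := by linarith
  rw [h3, div_sub_div_same, div_le_div_iff₀ h5 h5]
  nlinarith

/-- Pointwise bound on the Duhamel integral. -/
lemma duhamel_ptwise (μ ε t D : ℝ) (hμ : 0 < μ) (hε : 0 < ε) (hε1 : ε ≤ 1) (ht0 : 0 ≤ t)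
    (hD : 1 ≤ D) (f f1 f2 : ℝ → ℂ)
    (hfi : IntervalIntegrable f volume 0 t)
    (h1i : IntervalIntegrable (fun s => ‖f1 s‖) volume 0 t)
    (h2sq : IntervalIntegrable (fun s => ‖f2 s‖^2) volume 0 t)
    (hdec : ∀ s, f s = f1 s + f2 s)
    (hb1 : (∫ s in (0:ℝ)..t, ‖f1 s‖) ≤ D * Real.sqrt ε)
    (hb2 : (∫ s in (0:ℝ)..t, ‖f2 s‖^2) ≤ D) :
    ‖∫ s in (0:ℝ)..t, f s * ((Real.exp (-(μ / Real.sqrt ε) * (t - s)) : ℝ) : ℂ)‖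
      ≤ (D + Real.sqrt (D/(2*μ))) * Real.sqrt (Real.sqrt ε) := by
  have hsε : 0 < Real.sqrt ε := Real.sqrt_pos.mpr hε
  set a : ℝ := μ / Real.sqrt ε with ha_def
  have ha : 0 < a := div_pos hμ hsε
  set q : ℝ := Real.sqrt (Real.sqrt ε) with hq_def
  have hq0 : 0 < q := Real.sqrt_pos.mpr hsε
  have hq2 : q^2 = Real.sqrt ε := Real.sq_sqrt hsε.le
  have hq1 : q ≤ 1 := by
    rw [hq_def]
    exact Real.sqrt_le_one.mpr (Real.sqrt_le_one.mpr hε1)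
  have hsq : Real.sqrt ε ≤ q := by nlinarith
  set k : ℝ → ℝ := fun s => Real.exp (-a*(t-s)) with hk_def
  have hk_cont : Continuous k := Real.continuous_exp.comp (by continuity)
  have hD0 : 0 < D := by linarith
  clear_value a q
  -- integrability of ‖f2‖
  have h2norm : IntervalIntegrable (fun s => ‖f2 s‖) volume 0 t := by
    rw [intervalIntegrable_iff_integrableOn_Ioc_of_le ht0] at h2sq ⊢
    have hm : AEStronglyMeasurable (fun s => ‖f2 s‖) (volume.restrict (Set.Ioc 0 t)) := by
      have := Real.continuous_sqrt.comp_aestronglyMeasurable h2sq.aestronglyMeasurable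
      simpa [Real.sqrt_sq (norm_nonneg _)] using this
    have hg : Integrable (fun s => 1 + ‖f2 s‖^2) (volume.restrict (Set.Ioc 0 t)) := by
      simpa using (integrable_const (1:ℝ)).add h2sq
    refine hg.mono' hm (ae_of_all _ fun s => ?_)
    simp only [Real.norm_eq_abs, abs_norm]
    nlinarith [sq_nonneg (‖f2 s‖ - 1)]
  have hfk : IntervalIntegrable (fun s => ‖f s‖ * k s) volume 0 t :=
    hfi.norm.mul_continuousOn hk_cont.continuousOn
  have h2k : IntervalIntegrable (fun s => ‖f2 s‖ * k s) volume 0 t :=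
    h2norm.mul_continuousOn hk_cont.continuousOn
  -- step 1
  have step1 : ‖∫ s in (0:ℝ)..t, f s * ((Real.exp (-a * (t - s)) : ℝ) : ℂ)‖
      ≤ ∫ s in (0:ℝ)..t, ‖f s‖ * k s := by
    refine (intervalIntegral.norm_integral_le_integral_norm ht0).trans_eq ?_
    refine intervalIntegral.integral_congr fun s _ => ?_
    rw [norm_mul, Complex.norm_real, Real.norm_eq_abs, Real.abs_exp, hk_def]
  -- step 2
  have step2 : (∫ s in (0:ℝ)..t, ‖f s‖ * k s)
      ≤ (∫ s in (0:ℝ)..t, ‖f1 s‖) + ∫ s in (0:ℝ)..t, ‖f2 s‖ * k s := by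
    rw [← intervalIntegral.integral_add h1i h2k]
    refine intervalIntegral.integral_mono_on ht0 hfk (h1i.add h2k) fun s hs => ?_
    have hfs : ‖f s‖ ≤ ‖f1 s‖ + ‖f2 s‖ := by rw [hdec s]; exact norm_add_le _ _
    have hks : k s ≤ 1 := by
      rw [hk_def]
      exact Real.exp_le_one_iff.mpr (by nlinarith [hs.2, hs.1])
    have hk0 : 0 < k s := by rw [hk_def]; exact Real.exp_pos _
    nlinarith [norm_nonneg (f2 s), norm_nonneg (f1 s), norm_nonneg (f s)]
  -- first term
  have t1 : (∫ s in (0:ℝ)..t, ‖f1 s‖) ≤ D * q :=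
    hb1.trans (mul_le_mul_of_nonneg_left hsq hD0.le)
  -- second term
  set w : ℝ := Real.sqrt (2*μ*D) with hw_def
  have hw0 : 0 < w := Real.sqrt_pos.mpr (by positivity)
  have hw2 : w^2 = 2*μ*D := Real.sq_sqrt (by positivity)
  have hsqrtD : Real.sqrt (D/(2*μ)) = D / w := by
    rw [show D/(2*μ) = (D/w)^2 by rw [div_pow, hw2]; field_simp]
    exact Real.sqrt_sq (by positivity)
  clear_value w
  set l : ℝ := q / w with hl_def
  have hl : 0 < l := div_pos hq0 hw0
  have hBcont : Continuous (fun s => (k s)^2 / l) := by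
    exact ((hk_cont.pow 2).div_const l)
  have hRHS : IntervalIntegrable (fun s => (l*‖f2 s‖^2 + (k s)^2/l)/2) volume 0 t :=
    ((h2sq.const_mul l).add (hBcont.intervalIntegrable 0 t)).div_const 2
  have t2 : (∫ s in (0:ℝ)..t, ‖f2 s‖ * k s) ≤ Real.sqrt (D/(2*μ)) * q := by
    have step3 : (∫ s in (0:ℝ)..t, ‖f2 s‖ * k s)
        ≤ ∫ s in (0:ℝ)..t, (l*‖f2 s‖^2 + (k s)^2/l)/2 :=
      intervalIntegral.integral_mono_on ht0 h2k hRHS fun s _ => amgm18 l _ _ hl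
    have hint2 : (∫ s in (0:ℝ)..t, (k s)^2) ≤ Real.sqrt ε/(2*μ) := by
      have hle := exp_int18 a t ha
      have heq : (∫ s in (0:ℝ)..t, (k s)^2) = ∫ s in (0:ℝ)..t, Real.exp (2*a*s - 2*a*t) := by
        refine intervalIntegral.integral_congr fun s _ => ?_
        rw [hk_def]
        simp only
        rw [sq, ← Real.exp_add]
        congr 1
        ring
      rw [heq]
      refine hle.trans_eq ?_
      rw [ha_def]
      field_simp
    have hsplit : (∫ s in (0:ℝ)..t, (l*‖f2 s‖^2 + (k s)^2/l)/2)
        = ((l * ∫ s in (0:ℝ)..t, ‖f2 s‖^2) + (∫ s in (0:ℝ)..t, (k s)^2)/l)/2 := by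
      rw [intervalIntegral.integral_div, intervalIntegral.integral_add (h2sq.const_mul l)
        (hBcont.intervalIntegrable 0 t), intervalIntegral.integral_const_mul,
        intervalIntegral.integral_div]
    have hbound : ((l * ∫ s in (0:ℝ)..t, ‖f2 s‖^2) + (∫ s in (0:ℝ)..t, (k s)^2)/l)/2
        ≤ (l*D + (Real.sqrt ε/(2*μ))/l)/2 := by
      gcongr
    have hfinal : (l*D + (Real.sqrt ε/(2*μ))/l)/2 = Real.sqrt (D/(2*μ)) * q := by
      rw [hsqrtD, hl_def, ← hq2]
      field_simp
      linear_combination hw2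
    calc (∫ s in (0:ℝ)..t, ‖f2 s‖ * k s) ≤ _ := step3
      _ = _ := hsplit
      _ ≤ _ := hbound
      _ = _ := hfinal
  calc ‖∫ s in (0:ℝ)..t, f s * ((Real.exp (-a * (t - s)) : ℝ) : ℂ)‖
      ≤ ∫ s in (0:ℝ)..t, ‖f s‖ * k s := step1
    _ ≤ (∫ s in (0:ℝ)..t, ‖f1 s‖) + ∫ s in (0:ℝ)..t, ‖f2 s‖ * k s := step2
    _ ≤ D * q + Real.sqrt (D/(2*μ)) * q := add_le_add t1 t2
    _ = (D + Real.sqrt (D/(2*μ))) * q := by ring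

/-- decay of the Duhamel integral with damped kernel: if c_ε = c_ε¹ + c_ε²
with ‖c_ε¹‖_{L¹(0,T)} ≤ C√ε and ‖c_ε²‖_{L²(0,T)} ≤ C (and c_ε uniformly in L²), then
t ↦ ∫₀ᵗ c_ε(s) e^{-(μ/√ε)(t−s)} ds → 0 in L²(0,T) as ε → 0⁺, with rate ε^{1/4}. -/
theorem stmt_18 (μ T C : ℝ) (hμ : 0 < μ) (hT : 0 < T) (hC : 0 ≤ C)
    (c c1 c2 : ℝ → ℝ → ℂ)
    (hint : ∀ ε : ℝ, 0 < ε → IntervalIntegrable (c ε) volume 0 T)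
    (hint1 : ∀ ε : ℝ, 0 < ε → IntervalIntegrable (fun s => ‖c1 ε s‖) volume 0 T)
    (hint2 : ∀ ε : ℝ, 0 < ε → IntervalIntegrable (fun s => ‖c2 ε s‖ ^ 2) volume 0 T)
    (hdecomp : ∀ ε : ℝ, 0 < ε → ∀ s, c ε s = c1 ε s + c2 ε s)
    (hc1 : ∀ ε : ℝ, 0 < ε → (∫ s in (0:ℝ)..T, ‖c1 ε s‖) ≤ C * Real.sqrt ε)
    (hc2 : ∀ ε : ℝ, 0 < ε → (∫ s in (0:ℝ)..T, ‖c2 ε s‖ ^ 2) ≤ C)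
    (hL2 : ∀ ε : ℝ, 0 < ε → (∫ s in (0:ℝ)..T, ‖c ε s‖ ^ 2) ≤ C) :
    (∃ C' > 0, ∀ ε : ℝ, 0 < ε → ε ≤ 1 →
      Real.sqrt (∫ t in (0:ℝ)..T,
          ‖∫ s in (0:ℝ)..t, c ε s *
              ((Real.exp (-(μ / Real.sqrt ε) * (t - s)) : ℝ) : ℂ)‖ ^ 2)
        ≤ C' * ε ^ (1 / 4 : ℝ)) ∧
    Filter.Tendsto (fun ε : ℝ =>
        Real.sqrt (∫ t in (0:ℝ)..T,
          ‖∫ s in (0:ℝ)..t, c ε s *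
              ((Real.exp (-(μ / Real.sqrt ε) * (t - s)) : ℝ) : ℂ)‖ ^ 2))
      (nhdsWithin 0 (Set.Ioi 0)) (nhds 0) := by
  set D : ℝ := C + 1 with hD_def
  have hD : 1 ≤ D := by linarith
  have hD0 : 0 < D := by linarith
  set M : ℝ := D + Real.sqrt (D/(2*μ)) with hM_def
  have hM0 : 0 < M := by positivity
  set C' : ℝ := Real.sqrt T * M with hC'_def
  have hC'0 : 0 < C' := mul_pos (Real.sqrt_pos.mpr hT) hM0
  have key : ∀ ε : ℝ, 0 < ε → ε ≤ 1 →
      Real.sqrt (∫ t in (0:ℝ)..T,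
          ‖∫ s in (0:ℝ)..t, c ε s *
              ((Real.exp (-(μ / Real.sqrt ε) * (t - s)) : ℝ) : ℂ)‖ ^ 2)
        ≤ C' * Real.sqrt (Real.sqrt ε) := by
    intro ε hε hε1
    have hpt : ∀ t ∈ Set.Icc (0:ℝ) T,
        ‖∫ s in (0:ℝ)..t, c ε s * ((Real.exp (-(μ / Real.sqrt ε) * (t - s)) : ℝ) : ℂ)‖
          ≤ M * Real.sqrt (Real.sqrt ε) := by
      intro t ht
      have hsub : Set.uIcc (0:ℝ) t ⊆ Set.uIcc (0:ℝ) T := by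
        rw [Set.uIcc_of_le ht.1, Set.uIcc_of_le hT.le]
        exact Set.Icc_subset_Icc le_rfl ht.2
      refine duhamel_ptwise μ ε t D hμ hε hε1 ht.1 hD (c ε) (c1 ε) (c2 ε)
        ((hint ε hε).mono_set hsub) ((hint1 ε hε).mono_set hsub)
        ((hint2 ε hε).mono_set hsub) (hdecomp ε hε) ?_ ?_
      · refine (intervalIntegral.integral_mono_interval le_rfl ht.1 ht.2
          (Filter.Eventually.of_forall fun s => norm_nonneg _) (hint1 ε hε)).trans ?_
        exact (hc1 ε hε).trans (mul_le_mul_of_nonneg_right (by linarith) (Real.sqrt_nonneg ε))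
      · refine (intervalIntegral.integral_mono_interval le_rfl ht.1 ht.2
          (Filter.Eventually.of_forall fun s => sq_nonneg _) (hint2 ε hε)).trans ?_
        exact (hc2 ε hε).trans (by linarith)
    -- continuity of the Duhamel integral in t
    have hcont : ContinuousOn (fun t => ∫ s in (0:ℝ)..t, c ε s *
        ((Real.exp (-(μ / Real.sqrt ε) * (t - s)) : ℝ) : ℂ)) (Set.Icc 0 T) := by
      have hg : IntervalIntegrable
          (fun s => c ε s * ((Real.exp ((μ / Real.sqrt ε) * s) : ℝ) : ℂ)) volume 0 T :=
        (hint ε hε).mul_continuousOn (Continuous.continuousOn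
          (Complex.continuous_ofReal.comp (Real.continuous_exp.comp
            (continuous_const.mul continuous_id))))
      have hG : ContinuousOn
          (fun t => ∫ s in (0:ℝ)..t, c ε s * ((Real.exp ((μ / Real.sqrt ε) * s) : ℝ) : ℂ))
          (Set.Icc 0 T) := by
        have := intervalIntegral.continuousOn_primitive_interval' hg Set.left_mem_uIcc
        rwa [Set.uIcc_of_le hT.le] at this
      have hmul : ContinuousOn (fun t => ((Real.exp (-(μ / Real.sqrt ε) * t) : ℝ) : ℂ))
          (Set.Icc 0 T) := Continuous.continuousOn
        (Complex.continuous_ofReal.comp (Real.continuous_exp.comp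
          (continuous_const.mul continuous_id)))
      refine (hmul.mul hG).congr fun t _ => ?_
      simp only [Pi.mul_apply]
      rw [← intervalIntegral.integral_const_mul]
      refine intervalIntegral.integral_congr fun s _ => ?_
      have hxp : Real.exp (-(μ / Real.sqrt ε) * (t - s))
          = Real.exp (-(μ / Real.sqrt ε) * t) * Real.exp ((μ / Real.sqrt ε) * s) := by
        rw [← Real.exp_add]; ring_nf
      rw [hxp]
      push_cast
      ring
    have hIntSq : IntervalIntegrable (fun t => ‖∫ s in (0:ℝ)..t, c ε s *
        ((Real.exp (-(μ / Real.sqrt ε) * (t - s)) : ℝ) : ℂ)‖ ^ 2) volume 0 T := by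
      apply ContinuousOn.intervalIntegrable
      rw [Set.uIcc_of_le hT.le]
      exact (hcont.norm).pow 2
    have houter : (∫ t in (0:ℝ)..T, ‖∫ s in (0:ℝ)..t, c ε s *
        ((Real.exp (-(μ / Real.sqrt ε) * (t - s)) : ℝ) : ℂ)‖ ^ 2)
        ≤ T * (M * Real.sqrt (Real.sqrt ε)) ^ 2 := by
      have := intervalIntegral.integral_mono_on hT.le hIntSq
        (intervalIntegrable_const (c := (M * Real.sqrt (Real.sqrt ε)) ^ 2))
        (fun t ht => pow_le_pow_left₀ (norm_nonneg _) (hpt t ht) 2)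
      simpa using this
    refine (Real.sqrt_le_sqrt houter).trans_eq ?_
    rw [Real.sqrt_mul hT.le, Real.sqrt_sq (by positivity)]
    ring
  have hrpow : ∀ ε : ℝ, 0 ≤ ε → ε ^ (1/4:ℝ) = Real.sqrt (Real.sqrt ε) := by
    intro ε hε
    rw [Real.sqrt_eq_rpow, Real.sqrt_eq_rpow, ← Real.rpow_mul hε]
    norm_num
  constructor
  · refine ⟨C', hC'0, fun ε hε hε1 => ?_⟩
    rw [hrpow ε hε.le]
    exact key ε hε hε1
  · have h1 : ∀ᶠ ε : ℝ in nhdsWithin 0 (Set.Ioi 0), ε ≤ 1 :=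
      Filter.Eventually.filter_mono nhdsWithin_le_nhds (eventually_le_nhds one_pos)
    have h2 : ∀ᶠ ε : ℝ in nhdsWithin 0 (Set.Ioi 0), 0 < ε :=
      eventually_mem_nhdsWithin
    refine squeeze_zero' (Filter.Eventually.of_forall fun ε => Real.sqrt_nonneg _)
      (by filter_upwards [h1, h2] with ε hε1 hε using key ε hε hε1) ?_
    have : Filter.Tendsto (fun ε : ℝ => C' * Real.sqrt (Real.sqrt ε)) (nhds 0)
        (nhds (C' * Real.sqrt (Real.sqrt 0))) :=
      (continuous_const.mul (Real.continuous_sqrt.comp Real.continuous_sqrt)).tendsto 0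
    simpa using this.mono_left nhdsWithin_le_nhds
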